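/- Let α satisfy assumptions (I)–(III) with degeneracy parameter μ. Then for every u ∈ V¹_α(x₀,ℓ) one has ∫_{x₀}^{ℓ} |u(x) − u(ℓ)|² dx ≤ ((ℓ − x₀)² / ((2 − μ)·α(ℓ))) · ∫_{x₀}^{ℓ} α(x)|u'(x)|² dx. -/

import Mathlib

open MeasureTheory Set Filter Topology

lemma alpha_lower {x₀ ℓ μ ν : ℝ} {α α' : ℝ → ℝ} (hxl : x₀ < ℓ)
    (hpos : ∀ x ∈ Ioc x₀ ℓ, 0 < α x) (hcont : ContinuousOn α (Icc x₀ ℓ))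
    (hderiv : ∀ x ∈ Ioc x₀ ℓ, HasDerivWithinAt α (α' x) (Ioc x₀ ℓ) x)
    (hsup : ∀ x ∈ Ioc x₀ ℓ, (x - x₀) * |α' x| / α x ≤ μ)
    (hν : μ ≤ ν) {x : ℝ} (hx : x ∈ Ioc x₀ ℓ) :
    α ℓ * ((x - x₀) / (ℓ - x₀)) ^ ν ≤ α x := by
  obtain ⟨hx1, hx2⟩ := hx
  have hc : (0:ℝ) < ℓ - x₀ := by linarith
  have hxx : (0:ℝ) < x - x₀ := by linarith
  have hαx : 0 < α x := hpos x ⟨hx1, hx2⟩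
  have hαℓ : 0 < α ℓ := hpos ℓ ⟨hxl, le_rfl⟩
  set g : ℝ → ℝ := fun t => Real.log (α t) - ν * Real.log (t - x₀) with hg_def
  have hsub : Icc x ℓ ⊆ Ioc x₀ ℓ := fun t ht => ⟨lt_of_lt_of_le hx1 ht.1, ht.2⟩
  have hderivg : ∀ t ∈ Ioo x ℓ,
      HasDerivAt g (α' t / α t - ν * (1 / (t - x₀))) t := by
    intro t ht
    have ht' : t ∈ Ioc x₀ ℓ := hsub ⟨ht.1.le, ht.2.le⟩
    have hαt : 0 < α t := hpos t ht'
    have htx : (0:ℝ) < t - x₀ := by linarith [ht'.1]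
    have hα : HasDerivAt α (α' t) t :=
      (hderiv t ht').hasDerivAt (Ioc_mem_nhds ht'.1 ht.2)
    have h1 : HasDerivAt (fun t => Real.log (α t)) (α' t / α t) t := hα.log hαt.ne'
    have h2 : HasDerivAt (fun t => Real.log (t - x₀)) (1 / (t - x₀)) t := by
      have := ((hasDerivAt_id t).sub_const x₀).log (by positivity)
      simpa using this
    exact h1.sub (h2.const_mul ν)
  have hanti : AntitoneOn g (Icc x ℓ) := by
    apply antitoneOn_of_deriv_nonpos (convex_Icc x ℓ)
    · apply ContinuousOn.sub
      · exact ((hcont.mono (Icc_subset_Icc hx1.le le_rfl)).log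
          (fun t ht => (hpos t (hsub ht)).ne'))
      · exact continuousOn_const.mul
          (((continuousOn_id.sub continuousOn_const)).log
            (fun t ht => by have := (hsub ht).1; exact sub_ne_zero.2 (ne_of_gt this)))
    · intro t ht
      rw [interior_Icc] at ht
      exact ((hderivg t ht).differentiableAt).differentiableWithinAt
    · intro t ht
      rw [interior_Icc] at ht
      rw [(hderivg t ht).deriv]
      have ht' : t ∈ Ioc x₀ ℓ := hsub ⟨ht.1.le, ht.2.le⟩
      have hαt : 0 < α t := hpos t ht'
      have htx : (0:ℝ) < t - x₀ := by linarith [ht'.1]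
      have hb : (t - x₀) * |α' t| ≤ ν * α t := by
        have := (div_le_iff₀ hαt).1 ((hsup t ht').trans hν)
        linarith
      have hb2 : α' t * (t - x₀) ≤ ν * α t := by
        nlinarith [le_abs_self (α' t), htx]
      rw [sub_nonpos, div_le_iff₀ hαt,
        show ν * (1 / (t - x₀)) * α t = ν * α t / (t - x₀) by ring, le_div_iff₀ htx]
      exact hb2
  have hgl : g ℓ ≤ g x := hanti ⟨le_rfl, hx2⟩ ⟨hx2, le_rfl⟩ hx2
  have hlog : Real.log (α ℓ * ((x - x₀) / (ℓ - x₀)) ^ ν) ≤ Real.log (α x) := by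
    rw [Real.log_mul hαℓ.ne' (Real.rpow_pos_of_pos (div_pos hxx hc) ν).ne',
      Real.log_rpow (div_pos hxx hc), Real.log_div hxx.ne' hc.ne']
    simp only [hg_def] at hgl
    nlinarith [hgl]
  exact (Real.log_le_log_iff (by positivity) hαx).1 hlog


/-- Assumptions (I)-(III) on the degenerate weight `α` on `[x₀, ℓ]`, with degeneracy
parameter `μ`: `α` is positive on `(x₀, ℓ]` and vanishes at `x₀`; `α` is continuous on
`[x₀, ℓ]` and `C¹` on `(x₀, ℓ]` with derivative `α'`; and
`μ = sup_{x₀ < x ≤ ℓ} (x - x₀)|α'(x)|/α(x) = lim_{x → x₀⁺} (x - x₀)|α'(x)|/α(x) < 2`. -/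
def DegWeight (x₀ ℓ μ : ℝ) (α α' : ℝ → ℝ) : Prop :=
  (∀ x ∈ Ioc x₀ ℓ, 0 < α x) ∧ α x₀ = 0 ∧
  ContinuousOn α (Icc x₀ ℓ) ∧
  (∀ x ∈ Ioc x₀ ℓ, HasDerivWithinAt α (α' x) (Ioc x₀ ℓ) x) ∧
  ContinuousOn α' (Ioc x₀ ℓ) ∧
  IsLUB ((fun x => (x - x₀) * |α' x| / α x) '' Ioc x₀ ℓ) μ ∧
  Tendsto (fun x => (x - x₀) * |α' x| / α x) (𝓝[>] x₀) (𝓝 μ) ∧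
  μ < 2

/-- `u ∈ V¹_α(x₀, ℓ)` (real-valued): `u ∈ L²(x₀, ℓ)`, `u` is locally absolutely continuous
on `(x₀, ℓ]` with a.e. derivative `u'` (expressed via the fundamental theorem of calculus on
compact subintervals of `(x₀, ℓ]`), and `√α · u' ∈ L²(x₀, ℓ)`. -/
def MemV1 (x₀ ℓ : ℝ) (α u u' : ℝ → ℝ) : Prop :=
  MemLp u 2 (volume.restrict (Ioo x₀ ℓ)) ∧
  (∀ x y : ℝ, x₀ < x → x ≤ y → y ≤ ℓ →
    IntervalIntegrable u' volume x y ∧ u y - u x = ∫ t in x..y, u' t) ∧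
  MemLp (fun x => Real.sqrt (α x) * u' x) 2 (volume.restrict (Ioo x₀ ℓ))

/-- If `α` satisfies (I)-(III) with degeneracy parameter `μ`, then every
`u ∈ V¹_α(x₀, ℓ)` satisfies
`∫_{x₀}^{ℓ} |u(x) - u(ℓ)|² dx ≤ (ℓ - x₀)²/((2 - μ) α(ℓ)) · ∫_{x₀}^{ℓ} α(x)|u'(x)|² dx`. -/
theorem weighted_poincare (x₀ ℓ μ : ℝ) (α α' : ℝ → ℝ) (hxl : x₀ < ℓ)
    (h : DegWeight x₀ ℓ μ α α') (u u' : ℝ → ℝ) (hu : MemV1 x₀ ℓ α u u') :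
    ∫ x in Ioo x₀ ℓ, (u x - u ℓ) ^ 2 ≤
      (ℓ - x₀) ^ 2 / ((2 - μ) * α ℓ) * ∫ x in Ioo x₀ ℓ, α x * (u' x) ^ 2 := by
  obtain ⟨hpos, hα₀, hcont, hderiv, hcont', hlub, -, hμ2⟩ := h
  obtain ⟨huL2, hFTC, hgL2⟩ := hu
  have hsup : ∀ x ∈ Ioc x₀ ℓ, (x - x₀) * |α' x| / α x ≤ μ :=
    fun x hx => hlub.1 ⟨x, hx, rfl⟩
  have hA : 0 < α ℓ := hpos ℓ ⟨hxl, le_rfl⟩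
  have hc : (0:ℝ) < ℓ - x₀ := by linarith
  have hμ0 : 0 ≤ μ :=
    le_trans (div_nonneg (mul_nonneg hc.le (abs_nonneg _)) hA.le) (hsup ℓ ⟨hxl, le_rfl⟩)
  haveI hfin : IsFiniteMeasure (volume.restrict (Ioo x₀ ℓ)) :=
    ⟨by rw [Measure.restrict_apply_univ]; exact measure_Ioo_lt_top⟩
  -- integrability of α u'²
  have hI_int : IntegrableOn (fun x => α x * u' x ^ 2) (Ioo x₀ ℓ) volume := by
    have h1 := hgL2.integrable_sq
    apply h1.congr
    rw [EventuallyEq, ae_restrict_iff' measurableSet_Ioo]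
    filter_upwards with t ht
    have : 0 < α t := hpos t ⟨ht.1, ht.2.le⟩
    rw [mul_pow, Real.sq_sqrt this.le]
  set I : ℝ := ∫ x in Ioo x₀ ℓ, α x * u' x ^ 2 with hI_def
  have hI0 : 0 ≤ I := setIntegral_nonneg measurableSet_Ioo
    (fun t ht => mul_nonneg (hpos t ⟨ht.1, ht.2.le⟩).le (sq_nonneg _))
  have hQ : IntegrableOn (fun x => (u x - u ℓ) ^ 2) (Ioo x₀ ℓ) volume := by
    have := (huL2.sub (memLp_const (u ℓ))).integrable_sq
    apply this.congr
    filter_upwards with t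
    simp [Pi.sub_apply]
  -- the key inequality, for exponents ν ≠ 1
  have key : ∀ ν : ℝ, μ ≤ ν → ν < 2 → ν ≠ 1 →
      (∫ x in Ioo x₀ ℓ, (u x - u ℓ) ^ 2) ≤ (ℓ - x₀) ^ 2 / ((2 - ν) * α ℓ) * I := by
    intro ν hνμ hν2 hν1
    have hν0 : 0 ≤ ν := hμ0.trans hνμ
    have h2ν : (0:ℝ) < 2 - ν := by linarith
    have h1ν : (1:ℝ) - ν ≠ 0 := fun hh => hν1 (by linarith)
    set k : ℝ := (α ℓ)⁻¹ * (ℓ - x₀) ^ ν / (1 - ν) * I with hk_def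
    have P : ∀ x ∈ Ioo x₀ ℓ, (u x - u ℓ) ^ 2 ≤
        k * ((ℓ - x₀) ^ ((1:ℝ) - ν) - (x - x₀) ^ ((1:ℝ) - ν)) := by
      intro x hx
      obtain ⟨hx1, hx2⟩ := hx
      have hxx : (0:ℝ) < x - x₀ := by linarith
      have hxsub : Ioo x ℓ ⊆ Ioc x₀ ℓ := fun t ht => ⟨hx1.trans ht.1, ht.2.le⟩
      have hlow : ∀ t ∈ Ioc x₀ ℓ, α ℓ * ((t - x₀)/(ℓ - x₀)) ^ ν ≤ α t :=
        fun t ht => alpha_lower hxl hpos hcont hderiv hsup hνμ ht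
      set m := volume.restrict (Ioo x ℓ) with hm_def
      haveI : IsFiniteMeasure m :=
        ⟨by rw [hm_def, Measure.restrict_apply_univ]; exact measure_Ioo_lt_top⟩
      set f : ℝ → ℝ := fun t => (Real.sqrt (α t))⁻¹ with hf_def
      set g : ℝ → ℝ := fun t => Real.sqrt (α t) * u' t with hg_def
      set m₀ : ℝ := α ℓ * ((x - x₀)/(ℓ - x₀)) ^ ν with hm₀_def
      have hm₀ : 0 < m₀ := mul_pos hA (Real.rpow_pos_of_pos (div_pos hxx hc) ν)
      have hm₀le : ∀ t ∈ Ioo x ℓ, m₀ ≤ α t := by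
        intro t ht
        refine le_trans ?_ (hlow t (hxsub ht))
        apply mul_le_mul_of_nonneg_left ?_ hA.le
        apply Real.rpow_le_rpow (le_of_lt (div_pos hxx hc)) ?_ hν0
        exact (div_le_div_iff_of_pos_right hc).2 (by linarith [ht.1])
      have hf_meas : AEStronglyMeasurable f m := by
        apply ContinuousOn.aestronglyMeasurable ?_ measurableSet_Ioo
        apply ContinuousOn.inv₀
        · exact Real.continuous_sqrt.comp_continuousOn
            (hcont.mono (fun t ht => Ioc_subset_Icc_self (hxsub ht)))
        · intro t ht; exact (Real.sqrt_pos.2 (hpos t (hxsub ht))).ne'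
      have hf2 : MemLp f 2 m := by
        apply MemLp.of_bound hf_meas ((Real.sqrt m₀)⁻¹)
        rw [hm_def, ae_restrict_iff' measurableSet_Ioo]
        filter_upwards with t ht
        rw [Real.norm_eq_abs, abs_of_nonneg (inv_nonneg.2 (Real.sqrt_nonneg _))]
        exact inv_anti₀ (Real.sqrt_pos.2 hm₀) (Real.sqrt_le_sqrt (hm₀le t ht))
      have hg2 : MemLp g 2 m :=
        hgL2.mono_measure (Measure.restrict_mono (Ioo_subset_Ioo hx1.le le_rfl) le_rfl)
      have hpq : Real.HolderConjugate 2 2 := Real.HolderConjugate.two_two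
      have hCS := MeasureTheory.integral_mul_norm_le_Lp_mul_Lq hpq
        (by rw [ENNReal.ofReal_ofNat]; exact hf2) (by rw [ENNReal.ofReal_ofNat]; exact hg2)
      have hftc := (hFTC x ℓ hx1 hx2.le le_rfl).2
      have e0 : u ℓ - u x = ∫ t in Ioo x ℓ, u' t := by
        rw [hftc, intervalIntegral.integral_of_le hx2.le, integral_Ioc_eq_integral_Ioo]
      set F1 : ℝ := ∫ t in Ioo x ℓ, (α t)⁻¹ with hF1
      set F2 : ℝ := ∫ t in Ioo x ℓ, α t * u' t ^ 2 with hF2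
      have hF1_0 : 0 ≤ F1 := setIntegral_nonneg measurableSet_Ioo
        (fun t ht => inv_nonneg.2 (hpos t (hxsub ht)).le)
      have hF2_0 : 0 ≤ F2 := setIntegral_nonneg measurableSet_Ioo
        (fun t ht => mul_nonneg (hpos t (hxsub ht)).le (sq_nonneg _))
      have hsqr : ∀ a : ℝ, 0 ≤ a → (a ^ (1/2:ℝ)) ^ 2 = a := by
        intro a ha
        rw [← Real.rpow_two, ← Real.rpow_mul ha]
        norm_num
      have e4 : (∫ t, ‖f t‖ ^ (2:ℝ) ∂m) = F1 := by
        apply setIntegral_congr_fun measurableSet_Ioo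
        intro t ht
        have hαt := hpos t (hxsub ht)
        simp only [hf_def, Real.norm_eq_abs, Real.rpow_two, sq_abs]
        rw [inv_pow, Real.sq_sqrt hαt.le]
      have e5 : (∫ t, ‖g t‖ ^ (2:ℝ) ∂m) = F2 := by
        apply setIntegral_congr_fun measurableSet_Ioo
        intro t ht
        have hαt := hpos t (hxsub ht)
        simp only [hg_def, Real.norm_eq_abs, Real.rpow_two, sq_abs]
        rw [mul_pow, Real.sq_sqrt hαt.le]
      have e2 : |∫ t in Ioo x ℓ, u' t| ≤ ∫ t, ‖f t‖ * ‖g t‖ ∂m := by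
        calc |∫ t in Ioo x ℓ, u' t| ≤ ∫ t in Ioo x ℓ, ‖u' t‖ := by
              rw [← Real.norm_eq_abs]
              exact norm_integral_le_integral_norm _
          _ = ∫ t, ‖f t‖ * ‖g t‖ ∂m := by
              apply setIntegral_congr_fun measurableSet_Ioo
              intro t ht
              have hαt := hpos t (hxsub ht)
              have hs : Real.sqrt (α t) ≠ 0 := (Real.sqrt_pos.2 hαt).ne'
              simp only [hf_def, hg_def, Real.norm_eq_abs, abs_mul,
                abs_of_nonneg (inv_nonneg.2 (Real.sqrt_nonneg (α t))),
                abs_of_nonneg (Real.sqrt_nonneg (α t))]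
              rw [← mul_assoc, inv_mul_cancel₀ hs, one_mul]
      have hmain : (u x - u ℓ) ^ 2 ≤ F1 * F2 := by
        have h1 : (u x - u ℓ) ^ 2 = |∫ t in Ioo x ℓ, u' t| ^ 2 := by
          rw [sq_abs, ← e0]; ring
        have h2 : |∫ t in Ioo x ℓ, u' t| ≤ F1 ^ (1/2:ℝ) * F2 ^ (1/2:ℝ) := by
          rw [← e4, ← e5]
          exact e2.trans hCS
        calc (u x - u ℓ) ^ 2 = |∫ t in Ioo x ℓ, u' t| ^ 2 := h1
          _ ≤ (F1 ^ (1/2:ℝ) * F2 ^ (1/2:ℝ)) ^ 2 := pow_le_pow_left₀ (abs_nonneg _) h2 2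
          _ = F1 * F2 := by rw [mul_pow, hsqr F1 hF1_0, hsqr F2 hF2_0]
      have hint1 : IntegrableOn (fun t => (α t)⁻¹) (Ioo x ℓ) volume := by
        apply ContinuousOn.integrableOn_Icc ?_ |>.mono_set Ioo_subset_Icc_self
        exact (hcont.mono (Icc_subset_Icc hx1.le le_rfl)).inv₀
          (fun t ht => (hpos t ⟨lt_of_lt_of_le hx1 ht.1, ht.2⟩).ne')
      have hint2 : IntegrableOn
          (fun t => (α ℓ)⁻¹ * ((ℓ - x₀) ^ ν * (t - x₀) ^ (-ν))) (Ioo x ℓ) volume := by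
        apply ContinuousOn.integrableOn_Icc ?_ |>.mono_set Ioo_subset_Icc_self
        apply continuousOn_const.mul
        apply continuousOn_const.mul
        apply ContinuousOn.rpow_const (continuousOn_id.sub continuousOn_const)
        intro t ht
        refine Or.inl ?_
        exact sub_ne_zero.2 (ne_of_gt (lt_of_lt_of_le hx1 ht.1))
      have hval2 : ∫ t in Ioo x ℓ, (t - x₀) ^ (-ν)
          = (((ℓ - x₀) ^ (-ν+1) - (x - x₀) ^ (-ν+1))/(-ν+1)) := by
        rw [← integral_Ioc_eq_integral_Ioo, ← intervalIntegral.integral_of_le hx2.le,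
          intervalIntegral.integral_comp_sub_right (fun t => t ^ (-ν)) x₀,
          integral_rpow (Or.inr ⟨(by intro hh; apply hν1; linarith : -ν ≠ -1),
            notMem_uIcc_of_lt hxx (by linarith)⟩)]
      have hB1 : F1 ≤ (α ℓ)⁻¹ * (ℓ - x₀) ^ ν *
          (((ℓ - x₀) ^ ((1:ℝ)-ν) - (x - x₀) ^ ((1:ℝ)-ν))/(1-ν)) := by
        have hmono : F1 ≤ ∫ t in Ioo x ℓ, (α ℓ)⁻¹ * ((ℓ - x₀) ^ ν * (t - x₀) ^ (-ν)) := by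
          apply setIntegral_mono_on hint1 hint2 measurableSet_Ioo
          intro t ht
          have hαt := hpos t (hxsub ht)
          have htx : (0:ℝ) < t - x₀ := by linarith [ht.1]
          have h5 : (α t)⁻¹ ≤ (α ℓ * ((t - x₀)/(ℓ - x₀)) ^ ν)⁻¹ :=
            inv_anti₀ (mul_pos hA (Real.rpow_pos_of_pos (div_pos htx hc) ν))
              (hlow t (hxsub ht))
          refine h5.trans (le_of_eq ?_)
          rw [Real.div_rpow htx.le hc.le, Real.rpow_neg htx.le]
          have hr1 : (0:ℝ) < (t - x₀) ^ ν := Real.rpow_pos_of_pos htx ν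
          have hr2 : (0:ℝ) < (ℓ - x₀) ^ ν := Real.rpow_pos_of_pos hc ν
          field_simp
        refine hmono.trans (le_of_eq ?_)
        rw [MeasureTheory.integral_const_mul, MeasureTheory.integral_const_mul, hval2,
          show -ν+1 = (1:ℝ)-ν by ring]
        ring
      have hF2I : F2 ≤ I := by
        apply setIntegral_mono_set hI_int ?_ ((Ioo_subset_Ioo hx1.le le_rfl).eventuallyLE)
        rw [EventuallyLE, ae_restrict_iff' measurableSet_Ioo]
        filter_upwards with t
        intro ht
        simp only [Pi.zero_apply]
        exact mul_nonneg (hpos t ⟨ht.1, ht.2.le⟩).le (sq_nonneg _)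
      calc (u x - u ℓ) ^ 2 ≤ F1 * F2 := hmain
        _ ≤ ((α ℓ)⁻¹ * (ℓ - x₀) ^ ν *
            (((ℓ - x₀) ^ ((1:ℝ)-ν) - (x - x₀) ^ ((1:ℝ)-ν))/(1-ν))) * I :=
            mul_le_mul hB1 hF2I hF2_0 (hF1_0.trans hB1)
        _ = k * ((ℓ - x₀) ^ ((1:ℝ) - ν) - (x - x₀) ^ ((1:ℝ) - ν)) := by
            rw [hk_def]; ring
    have h_rpow_int : IntegrableOn (fun x => (x - x₀) ^ ((1:ℝ)-ν)) (Ioo x₀ ℓ) volume := by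
      have h1 : IntervalIntegrable (fun t : ℝ => t ^ ((1:ℝ)-ν)) volume 0 (ℓ - x₀) :=
        intervalIntegral.intervalIntegrable_rpow' (by linarith)
      have h2 := h1.comp_sub_right x₀
      simp only [zero_add, sub_add_cancel] at h2
      exact (h2.1).mono_set Ioo_subset_Ioc_self
    have hconst_int : IntegrableOn (fun _ : ℝ => (ℓ - x₀) ^ ((1:ℝ)-ν)) (Ioo x₀ ℓ) volume :=
      integrableOn_const measure_Ioo_lt_top.ne
    have hR : IntegrableOn
        (fun x => k * ((ℓ - x₀) ^ ((1:ℝ)-ν) - (x - x₀) ^ ((1:ℝ)-ν))) (Ioo x₀ ℓ) volume :=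
      (hconst_int.sub h_rpow_int).const_mul k
    have step1 := setIntegral_mono_on hQ hR measurableSet_Ioo P
    refine step1.trans (le_of_eq ?_)
    have hval : ∫ x in Ioo x₀ ℓ, (x - x₀) ^ ((1:ℝ)-ν) = (ℓ - x₀) ^ ((2:ℝ)-ν) / (2 - ν) := by
      rw [← integral_Ioc_eq_integral_Ioo, ← intervalIntegral.integral_of_le hxl.le,
        intervalIntegral.integral_comp_sub_right (fun t => t ^ ((1:ℝ)-ν)) x₀, sub_self,
        integral_rpow (Or.inl (by linarith)),
        Real.zero_rpow (by intro hh; apply h2ν.ne'; linarith : (1:ℝ)-ν+1 ≠ 0),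
        show (1:ℝ)-ν+1 = 2-ν by ring]
      ring
    have hconst_val : ∫ _x in Ioo x₀ ℓ, (ℓ-x₀)^((1:ℝ)-ν) = (ℓ - x₀) * (ℓ-x₀)^((1:ℝ)-ν) := by
      rw [setIntegral_const, Real.volume_real_Ioo_of_le hxl.le, smul_eq_mul]
    rw [MeasureTheory.integral_const_mul, integral_sub hconst_int h_rpow_int, hconst_val, hval]
    have e1 : (ℓ-x₀) * (ℓ-x₀)^((1:ℝ)-ν) = (ℓ-x₀)^((2:ℝ)-ν) := by
      rw [show (2:ℝ)-ν = 1+(1-ν) by ring, Real.rpow_add hc, Real.rpow_one]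
    have e2 : (ℓ-x₀)^ν * (ℓ-x₀)^((2:ℝ)-ν) = (ℓ-x₀)^2 := by
      rw [← Real.rpow_add hc, show ν + ((2:ℝ)-ν) = (2:ℝ) by ring, Real.rpow_two]
    rw [e1, hk_def, ← e2]
    field_simp
    ring
  -- pass to the limit ν → μ⁺, avoiding ν = 1
  set a : ℕ → ℝ := fun n => μ + (2 - μ) / (n + 2) with ha_def
  have hpos2 : ∀ n : ℕ, 0 < (2 - μ) / ((n : ℝ) + 2) := by
    intro n
    apply div_pos (by linarith)
    positivity
  have ha1 : ∀ n : ℕ, μ ≤ a n ∧ a n < 2 := by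
    intro n
    constructor
    · simp only [ha_def]; nlinarith [hpos2 n]
    · simp only [ha_def]
      have h2 : (2 - μ) / ((n : ℝ) + 2) ≤ (2 - μ) / 2 := by
        apply div_le_div_of_nonneg_left (by linarith) (by norm_num)
        · simp
      linarith
  have hlim : Tendsto a atTop (𝓝 μ) := by
    have h0 : Tendsto (fun n : ℕ => (2 - μ) / ((n : ℝ) + 2)) atTop (𝓝 0) := by
      apply Tendsto.div_atTop tendsto_const_nhds
      exact tendsto_atTop_add_const_right atTop 2 tendsto_natCast_atTop_atTop
    simpa using tendsto_const_nhds.add h0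
  have hne : ∀ᶠ n in atTop, a n ≠ 1 := by
    rcases lt_trichotomy μ 1 with hμ1 | hμ1 | hμ1
    · filter_upwards [hlim.eventually_lt_const hμ1] with n hn
      exact ne_of_lt hn
    · filter_upwards with n
      simp only [ha_def]
      nlinarith [hpos2 n]
    · filter_upwards with n
      have := (ha1 n).1
      exact ne_of_gt (by linarith)
  have hCtend : Tendsto (fun n => (ℓ - x₀) ^ 2 / ((2 - a n) * α ℓ) * I) atTop
      (𝓝 ((ℓ - x₀) ^ 2 / ((2 - μ) * α ℓ) * I)) := by
    apply Tendsto.mul_const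
    apply Tendsto.div tendsto_const_nhds
    · exact (tendsto_const_nhds.sub hlim).mul_const _
    · exact mul_ne_zero (by linarith) hA.ne'
  refine ge_of_tendsto hCtend ?_
  filter_upwards [hne] with n hn
  exact key (a n) (ha1 n).1 (ha1 n).2 hn
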